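/- Let F(x,y) = (x + p_k(x,y) + higher, y + q_k(x,y) + higher) be tangent to the identity of order k ≥ 2, and let [1 : v_0] be a characteristic direction of F, i.e., q_k(1, v_0) − v_0 p_k(1, v_0) = 0. Then the lift F̃ of F to the blow-up chart (x,v) ↦ (x,xv) is tangent to the identity at the point (0, v_0) with order at least k, i.e., ord(F̃_{(0,v_0)}) ≥ ord(F). -/

import Mathlib

open Finsupp

noncomputable section

abbrev F2 : Type := MvPowerSeries (Fin 2) ℂ

/-- total degree of a monomial exponent -/
def deg (d : Fin 2 →₀ ℕ) : ℕ := d 0 + d 1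

/-- the exponent (m, n) -/
def idx (m n : ℕ) : Fin 2 →₀ ℕ := Finsupp.single 0 m + Finsupp.single 1 n

/-- partial derivative of a formal power series -/
def pd (i : Fin 2) (f : F2) : F2 :=
  fun d => ((d i : ℂ) + 1) * MvPowerSeries.coeff (R := ℂ) (d + Finsupp.single i 1) f

/-- the derivation a ∂/∂x + b ∂/∂y applied to g -/
def vf (a b g : F2) : F2 := a * pd 0 g + b * pd 1 g

/-- `ordGE f k` : the order ν(f) is at least k -/
def ordGE (f : F2) (k : ℕ) : Prop :=
  ∀ d : Fin 2 →₀ ℕ, deg d < k → MvPowerSeries.coeff (R := ℂ) d f = 0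

/-- exp X (g) = Σ_j (1/j!) X^j(g), coefficientwise -/
def expX (a b g : F2) : F2 :=
  fun d => ∑' j : ℕ, ((j.factorial : ℂ))⁻¹ * MvPowerSeries.coeff (R := ℂ) d ((vf a b)^[j] g)

/-- degree-k homogeneous part -/
def HT (k : ℕ) (f : F2) : F2 :=
  fun d => if deg d = k then MvPowerSeries.coeff (R := ℂ) d f else 0

/-- substitution y := x·v :  f(x, xv), in coordinates (x, v) -/
def blowup (f : F2) : F2 :=
  fun d => if d 1 ≤ d 0 then MvPowerSeries.coeff (R := ℂ) (idx (d 0 - d 1) (d 1)) f else 0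

/-- `dehom k f` = f_k(1, v), where f_k is the degree-k homogeneous part of f -/
def dehom (k : ℕ) (f : F2) : F2 :=
  fun d => if d 0 = 0 ∧ d 1 ≤ k then MvPowerSeries.coeff (R := ℂ) (idx (k - d 1) (d 1)) f else 0

/-- evaluation of the degree-k homogeneous part of f at (1, v0) -/
def evk (k : ℕ) (v0 : ℂ) (f : F2) : ℂ :=
  ∑ n ∈ Finset.range (k+1), MvPowerSeries.coeff (R := ℂ) (idx (k-n) n) f * v0 ^ n

/-- the linear change of coordinates f(x, y) ↦ f(x, y + v0·x) -/
def shear (v0 : ℂ) (f : F2) : F2 :=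
  fun d => ∑ j ∈ Finset.range (deg d + 1),
    if d 1 ≤ j ∧ j - d 1 ≤ d 0 then
      (j.choose (d 1) : ℂ) * v0 ^ (j - d 1) *
        MvPowerSeries.coeff (R := ℂ) (idx (d 0 - (j - d 1)) j) f
    else 0

/-- the coordinate x -/
def Xv : F2 := MvPowerSeries.X 0
/-- the coordinate y (alias v in the blow-up chart) -/
def Yv : F2 := MvPowerSeries.X 1

end

noncomputable section

lemma idx0 (m n : ℕ) : idx m n 0 = m := by
  simp [idx, Finsupp.single_apply]

lemma idx1 (m n : ℕ) : idx m n 1 = n := by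
  simp [idx, Finsupp.single_apply]

lemma deg_idx (m n : ℕ) : deg (idx m n) = m + n := by simp [deg, idx0, idx1]

lemma eq_idx (d : Fin 2 →₀ ℕ) : d = idx (d 0) (d 1) := by
  ext i; fin_cases i <;> simp [idx0, idx1]

lemma deg_add (a b : Fin 2 →₀ ℕ) : deg (a + b) = deg a + deg b := by
  simp [deg]; ring

lemma deg_eq_zero' {d : Fin 2 →₀ ℕ} (h : deg d = 0) : d = 0 := by
  have h0 : d 0 = 0 ∧ d 1 = 0 := by unfold deg at h; omega
  ext i; fin_cases i <;> simp [h0.1, h0.2]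

lemma single_le_idx (a b : ℕ) : Finsupp.single (0 : Fin 2) 1 ≤ idx (a+1) b := by
  rw [Finsupp.le_def]; intro i; fin_cases i <;> simp [idx0, idx1, Finsupp.single_apply]

lemma idx_sub_single (a b : ℕ) : idx (a+1) b - Finsupp.single 0 1 = idx a b := by
  ext i; fin_cases i <;> simp [Finsupp.tsub_apply, idx0, idx1, Finsupp.single_apply]

lemma shear_ordGE (v0 : ℂ) {f : F2} {k : ℕ} (hf : ordGE f k) : ordGE (shear v0 f) k := by
  intro d hd
  rw [MvPowerSeries.coeff_apply]
  unfold shear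
  apply Finset.sum_eq_zero
  intro j hj
  split_ifs with h
  · rw [hf (idx (d 0 - (j - d 1)) j) (by rw [deg_idx]; unfold deg at hd; omega), mul_zero]
  · rfl

lemma blowup_ordGE {f : F2} {k : ℕ} (hf : ordGE f k) : ordGE (blowup f) k := by
  intro d hd
  rw [MvPowerSeries.coeff_apply]
  unfold blowup
  split_ifs with h
  · exact hf _ (by rw [deg_idx]; unfold deg at hd; omega)
  · rfl

lemma ordGE_sub {f g : F2} {k : ℕ} (hf : ordGE f k) (hg : ordGE g k) : ordGE (f - g) k := by
  intro d hd; rw [map_sub, hf d hd, hg d hd, sub_zero]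

lemma ordGE_smul (c : ℂ) {f : F2} {k : ℕ} (hf : ordGE f k) : ordGE (c • f) k := by
  intro d hd
  rw [LinearMap.map_smul, hf d hd, smul_zero]

lemma shear_coeff_k0 (v0 : ℂ) (f : F2) (k : ℕ) :
    MvPowerSeries.coeff (R := ℂ) (idx k 0) (shear v0 f) = evk k v0 f := by
  rw [MvPowerSeries.coeff_apply]
  unfold shear evk
  simp only [idx0, idx1, deg_idx, Nat.add_zero, Nat.sub_zero]
  refine Finset.sum_congr rfl (fun j hj => ?_)
  rw [Finset.mem_range] at hj
  rw [if_pos ⟨Nat.zero_le _, by omega⟩, Nat.choose_zero_right]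
  push_cast
  ring

/-- at a characteristic direction [1 : v0] (q_k(1,v0) = v0 p_k(1,v0)), the germ of
the lift F̃ at (0,v0) is tangent to the identity of order ≥ k.  The germ at (0,v0) is computed in
centered coordinates via the linear change of coordinates (x,y) ↦ (x, y + v0 x) (`shear`) followed
by the blow-up chart: A, B are its components, characterized by π ∘ F̃ = F ∘ π. -/
theorem lift_order_at_characteristic_direction (p q : F2) (k : ℕ) (hk : 2 ≤ k)
    (hp : ordGE p k) (hq : ordGE q k)
    (v0 : ℂ) (hchar : evk k v0 q = v0 * evk k v0 p)
    (A B : F2)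
    (hA : A = Xv + blowup (shear v0 p))
    (hB : A * B = Xv * Yv + blowup (shear v0 q - v0 • shear v0 p)) :
    ordGE (A - Xv) k ∧ ordGE (B - Yv) k := by
  set E : F2 := blowup (shear v0 p) with hE
  set g : F2 := shear v0 q - v0 • shear v0 p with hg
  have hEord : ordGE E k := blowup_ordGE (shear_ordGE v0 hp)
  have hgord : ordGE g k := ordGE_sub (shear_ordGE v0 hq) (ordGE_smul v0 (shear_ordGE v0 hp))
  have hgk0 : MvPowerSeries.coeff (R := ℂ) (idx k 0) g = 0 := by
    rw [hg, map_sub, LinearMap.map_smul, shear_coeff_k0, shear_coeff_k0, smul_eq_mul, hchar,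
      sub_self]
  have hAX : A - Xv = E := by rw [hA]; ring
  -- constant coefficient of B vanishes
  have hEmulB : ∀ e : Fin 2 →₀ ℕ, deg e < k → MvPowerSeries.coeff (R := ℂ) e (E * B) = 0 := by
    intro e he
    rw [MvPowerSeries.coeff_mul]
    apply Finset.sum_eq_zero
    rintro ⟨b1, b2⟩ hmem
    rw [Finset.HasAntidiagonal.mem_antidiagonal] at hmem
    have hdd : deg b1 + deg b2 = deg e := by rw [← deg_add, hmem]
    rw [hEord b1 (by omega), zero_mul]
  have hB0 : MvPowerSeries.coeff (R := ℂ) 0 B = 0 := by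
    have hone : idx 1 0 = Finsupp.single (0 : Fin 2) 1 := by simp [idx]
    have hxy : MvPowerSeries.coeff (R := ℂ) (idx 1 0) (Xv * Yv) = 0 := by
      rw [Xv, Yv, MvPowerSeries.X_def, MvPowerSeries.X_def,
        MvPowerSeries.monomial_mul_monomial, MvPowerSeries.coeff_monomial, if_neg]
      intro hcon
      have := congrArg (fun d : Fin 2 →₀ ℕ => d 1) hcon
      simp only [idx1] at this
      rw [show Finsupp.single (0:Fin 2) 1 + Finsupp.single (1:Fin 2) 1 = idx 1 1 from rfl,
        idx1] at this
      exact one_ne_zero this.symm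
    have hC : MvPowerSeries.coeff (R := ℂ) (idx 1 0) (blowup g) = 0 := by
      rw [MvPowerSeries.coeff_apply]
      unfold blowup
      rw [if_pos (by rw [idx0, idx1]; omega)]
      exact hgord _ (by rw [deg_idx, idx0, idx1]; omega)
    have h := congrArg (MvPowerSeries.coeff (R := ℂ) (idx 1 0)) hB
    rw [map_add, hxy, hC, hA, add_mul, map_add] at h
    rw [Xv, MvPowerSeries.X_def, MvPowerSeries.coeff_monomial_mul, hone, if_pos le_rfl,
      tsub_self, one_mul] at h
    rw [hEmulB (Finsupp.single 0 1) (by rw [← hone, deg_idx]; omega)] at h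
    simpa using h
  -- coefficient of E*B vanishes in degree ≤ k
  have hEB : ∀ e : Fin 2 →₀ ℕ, deg e ≤ k → MvPowerSeries.coeff (R := ℂ) e (E * B) = 0 := by
    intro e he
    rw [MvPowerSeries.coeff_mul]
    apply Finset.sum_eq_zero
    rintro ⟨b1, b2⟩ hmem
    rw [Finset.HasAntidiagonal.mem_antidiagonal] at hmem
    have hdd : deg b1 + deg b2 = deg e := by rw [← deg_add, hmem]
    by_cases h1 : deg b1 < k
    · rw [hEord b1 h1, zero_mul]
    · have : b2 = 0 := deg_eq_zero' (by omega)
      rw [this, hB0, mul_zero]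
  -- coefficient of blowup g at (a+1, b) vanishes for a + b < k
  have hCc : ∀ a b : ℕ, a + b < k → MvPowerSeries.coeff (R := ℂ) (idx (a+1) b) (blowup g) = 0 := by
    intro a b hab
    rw [MvPowerSeries.coeff_apply]
    unfold blowup
    simp only [idx0, idx1]
    by_cases hba : b ≤ a + 1
    · rw [if_pos hba]
      by_cases hak : a + 1 < k
      · exact hgord _ (by rw [deg_idx]; omega)
      · have ha : a + 1 = k := by omega
        have hb : b = 0 := by omega
        subst hb
        rw [Nat.sub_zero, ha]
        exact hgk0
    · rw [if_neg hba]
  refine ⟨by rw [hAX]; exact hEord, ?_⟩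
  intro d hd
  have hdeg : d 0 + d 1 < k := hd
  have hxy : MvPowerSeries.coeff (R := ℂ) (idx (d 0 + 1) (d 1)) (Xv * Yv)
      = MvPowerSeries.coeff (R := ℂ) d Yv := by
    rw [Xv, Yv, MvPowerSeries.X_def, MvPowerSeries.X_def,
      MvPowerSeries.monomial_mul_monomial, MvPowerSeries.coeff_monomial, mul_one,
      show Finsupp.single (0:Fin 2) 1 + Finsupp.single (1:Fin 2) 1 = idx 1 1 from rfl,
      MvPowerSeries.coeff_monomial]
    by_cases hcase : d 0 = 0 ∧ d 1 = 1
    · have h1 : idx (d 0 + 1) (d 1) = idx 1 1 := by rw [hcase.1, hcase.2]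
      have h2 : d = Finsupp.single 1 1 := by
        ext i; fin_cases i <;> simp [hcase.1, hcase.2, Finsupp.single_apply]
      rw [if_pos h1, if_pos h2]
    · rw [if_neg, if_neg]
      · intro hcon
        have h0 := congrArg (fun e : Fin 2 →₀ ℕ => e 0) hcon
        have h1 := congrArg (fun e : Fin 2 →₀ ℕ => e 1) hcon
        simp only [Finsupp.single_apply] at h0 h1
        exact hcase ⟨by simpa using h0, by simpa using h1⟩
      · intro hcon
        have h0 := congrArg (fun e : Fin 2 →₀ ℕ => e 0) hcon
        have h1 := congrArg (fun e : Fin 2 →₀ ℕ => e 1) hcon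
        simp only [idx0, idx1] at h0 h1
        exact hcase ⟨by omega, h1⟩
  have hc := congrArg (MvPowerSeries.coeff (R := ℂ) (idx (d 0 + 1) (d 1))) hB
  rw [map_add, hxy, hCc (d 0) (d 1) hdeg, hA, add_mul, map_add] at hc
  rw [Xv, MvPowerSeries.X_def, MvPowerSeries.coeff_monomial_mul,
    if_pos (single_le_idx (d 0) (d 1)), idx_sub_single, ← eq_idx, one_mul] at hc
  rw [hEB (idx (d 0 + 1) (d 1)) (by rw [deg_idx]; omega)] at hc
  rw [map_sub, sub_eq_zero]
  simpa using hc

end
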